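/- arXiv:1912.11386 — 2 statements merged into one kernel-verified Lean document; each statement's English description precedes it below -/
import Mathlib

section
/- For any ring R and n ≥ 3, and any twosided ideal I of R, the relative elementary subgroup satisfies E_n(R,I) = [E_n(R), E_n(R,I)]. In particular, the elementary group E_n(R) is a perfect group. -/
open Matrix
open scoped commutatorElement

/-- An exchange ring: for every `x` there is an idempotent `e ∈ xR` with `1 - e ∈ (1-x)R`. -/
def IsExchangeRing (R : Type*) [Ring R] : Prop :=
  ∀ x : R, ∃ e r s : R, e * e = e ∧ e = x * r ∧ 1 - e = (1 - x) * s

/-- The elementary transvection `t_{ij}(x) = e + x e^{ij}` as an element of `GL n R`. -/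
def transv {n : ℕ} {R : Type*} [Ring R] (i j : Fin n) (hij : i ≠ j) (x : R) :
    (Matrix (Fin n) (Fin n) R)ˣ :=
  ⟨1 + Matrix.single i j x, 1 + Matrix.single i j (-x),
    by
      have h0 := (Matrix.single_mul_single_of_ne x i j i hij.symm (-x) :
        Matrix.single i j x * Matrix.single i j (-x) = 0)
      have h1 := (Matrix.single_mul_single_of_ne (-x) i j i hij.symm x :
        Matrix.single i j (-x) * Matrix.single i j x = 0)
      simp [mul_add, add_mul, h0, h1, ← Matrix.single_add, add_assoc],
    by
      have h0 := (Matrix.single_mul_single_of_ne x i j i hij.symm (-x) :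
        Matrix.single i j x * Matrix.single i j (-x) = 0)
      have h1 := (Matrix.single_mul_single_of_ne (-x) i j i hij.symm x :
        Matrix.single i j (-x) * Matrix.single i j x = 0)
      simp [mul_add, add_mul, h0, h1, ← Matrix.single_add, add_assoc]⟩

/-- The elementary subgroup `E_n(R)` of `GL_n(R)`. -/
def elemGroup (n : ℕ) (R : Type*) [Ring R] : Subgroup ((Matrix (Fin n) (Fin n) R)ˣ) :=
  Subgroup.closure { g | ∃ i j : Fin n, ∃ hij : i ≠ j, ∃ x : R, g = transv i j hij x }

/-- The preelementary subgroup `E_n(I)` of level a two-sided ideal `I`. -/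
def preElem (n : ℕ) (R : Type*) [Ring R] (I : TwoSidedIdeal R) : Subgroup ((Matrix (Fin n) (Fin n) R)ˣ) :=
  Subgroup.closure { g | ∃ i j : Fin n, ∃ hij : i ≠ j, ∃ x ∈ I, g = transv i j hij x }

/-- The relative elementary subgroup `E_n(R,I)`: the normal closure of `E_n(I)` in `E_n(R)`. -/
def relElem (n : ℕ) (R : Type*) [Ring R] (I : TwoSidedIdeal R) : Subgroup ((Matrix (Fin n) (Fin n) R)ˣ) :=
  Subgroup.closure { g | ∃ τ ∈ elemGroup n R, ∃ ε ∈ preElem n R I, g = τ⁻¹ * ε * τ }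

/-- The full congruence subgroup `C_n(R,I)`: preimage of the center of `GL_n(R/I)`. -/
def congrSubgroup (n : ℕ) (R : Type*) [Ring R] (I : TwoSidedIdeal R) :
    Subgroup ((Matrix (Fin n) (Fin n) R)ˣ) :=
  Subgroup.comap
    (Units.map ((RingHom.mapMatrix (RingCon.mk' I.ringCon)).toMonoidHom :
      Matrix (Fin n) (Fin n) R →* Matrix (Fin n) (Fin n) I.ringCon.Quotient))
    (Subgroup.center ((Matrix (Fin n) (Fin n) I.ringCon.Quotient)ˣ))

/-- `x` is a product of `m` `H`-conjugates of `a` and `a⁻¹`. -/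
def IsProdConj {G : Type*} [Group G] (H : Subgroup G) (a x : G) (m : ℕ) : Prop :=
  ∃ f : Fin m → G, (∀ k, ∃ h ∈ H, f k = h⁻¹ * a * h ∨ f k = h⁻¹ * a⁻¹ * h) ∧
    x = (List.ofFn f).prod

lemma transv_commutator {n : ℕ} {R : Type*} [Ring R] (i j k : Fin n)
    (hij : i ≠ j) (hik : i ≠ k) (hkj : k ≠ j) (x : R) :
    ⁅transv i k hik x, transv k j hkj 1⁆ = transv i j hij x := by
  ext a b
  simp only [commutatorElement_def, transv, Units.val_mul, Units.inv_mk]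
  simp [mul_add, add_mul, Matrix.single_mul_single_of_ne, Matrix.single_mul_single_same,
    hij, hik, hkj, hij.symm, hik.symm, hkj.symm, Ne.symm]
  simp only [Matrix.single, Matrix.of_apply, Matrix.one_apply]
  split_ifs <;> abel
lemma exists_third {n : ℕ} (hn : 3 ≤ n) (i j : Fin n) : ∃ k : Fin n, i ≠ k ∧ k ≠ j := by
  have h : (({i, j} : Finset (Fin n))ᶜ).Nonempty := by
    rw [← Finset.card_pos, Finset.card_compl]
    have h2 : ({i, j} : Finset (Fin n)).card ≤ 2 := Finset.card_insert_le _ _ |>.trans (by simp)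
    simp only [Fintype.card_fin]
    omega
  obtain ⟨k, hk⟩ := h
  simp only [Finset.mem_compl, Finset.mem_insert, Finset.mem_singleton, not_or] at hk
  exact ⟨k, fun h => hk.1 h.symm, hk.2⟩

lemma transv_mem_elem {n : ℕ} {R : Type*} [Ring R] (i j : Fin n) (hij : i ≠ j) (x : R) :
    transv i j hij x ∈ elemGroup n R :=
  Subgroup.subset_closure ⟨i, j, hij, x, rfl⟩

lemma transv_mem_pre {n : ℕ} {R : Type*} [Ring R] {I : TwoSidedIdeal R} (i j : Fin n)
    (hij : i ≠ j) {x : R} (hx : x ∈ I) : transv i j hij x ∈ preElem n R I :=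
  Subgroup.subset_closure ⟨i, j, hij, x, hx, rfl⟩

lemma preElem_le_relElem {n : ℕ} {R : Type*} [Ring R] (I : TwoSidedIdeal R) :
    preElem n R I ≤ relElem n R I := by
  rw [preElem, Subgroup.closure_le]
  intro g hg
  exact Subgroup.subset_closure ⟨1, one_mem _, g, Subgroup.subset_closure hg, by simp⟩

lemma relElem_conj {n : ℕ} {R : Type*} [Ring R] {I : TwoSidedIdeal R}
    {σ g : (Matrix (Fin n) (Fin n) R)ˣ} (hσ : σ ∈ elemGroup n R) (hg : g ∈ relElem n R I) :
    σ⁻¹ * g * σ ∈ relElem n R I := by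
  have : relElem n R I ≤ Subgroup.comap ((MulAut.conj σ⁻¹).toMonoidHom) (relElem n R I) := by
    rw [relElem, Subgroup.closure_le]
    rintro g ⟨τ, hτ, ε, hε, rfl⟩
    simp only [Set.mem_preimage, SetLike.mem_coe, Subgroup.mem_comap, MulEquiv.coe_toMonoidHom,
      MulAut.conj_apply]
    have : σ⁻¹ * (τ⁻¹ * ε * τ) * (σ⁻¹)⁻¹ = (τ * σ)⁻¹ * ε * (τ * σ) := by group
    rw [this]
    exact Subgroup.subset_closure ⟨τ * σ, mul_mem hτ hσ, ε, hε, rfl⟩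
  have := this hg
  simpa [Subgroup.mem_comap, mul_assoc] using this
theorem relElem_eq_commutator {n : ℕ} (R : Type*) [Ring R] (hn : 3 ≤ n) :
    (∀ I : TwoSidedIdeal R, relElem n R I = ⁅elemGroup n R, relElem n R I⁆) ∧
    ⁅elemGroup n R, elemGroup n R⁆ = elemGroup n R := by
  constructor
  · intro I
    apply le_antisymm
    · have hpre : preElem n R I ≤ ⁅elemGroup n R, relElem n R I⁆ := by
        rw [preElem, Subgroup.closure_le]
        rintro g ⟨i, j, hij, x, hx, rfl⟩
        obtain ⟨k, hik, hkj⟩ := exists_third hn i j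
        rw [← transv_commutator i j k hij hik hkj x, Subgroup.commutator_comm]
        exact Subgroup.commutator_mem_commutator
          (preElem_le_relElem I (transv_mem_pre i k hik hx)) (transv_mem_elem k j hkj 1)
      refine (Subgroup.closure_le _).2 ?_
      rintro g ⟨τ, hτ, ε, hε, rfl⟩
      have h1 : ⁅τ⁻¹, ε⁆ ∈ ⁅elemGroup n R, relElem n R I⁆ :=
        Subgroup.commutator_mem_commutator (inv_mem hτ) (preElem_le_relElem I hε)
      have h : τ⁻¹ * ε * τ = ⁅τ⁻¹, ε⁆ * ε := by group
      rw [h]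
      exact mul_mem h1 (hpre hε)
    · rw [Subgroup.commutator_le]
      intro e he r hr
      have h1 : e * r * e⁻¹ ∈ relElem n R I := by
        simpa using relElem_conj (inv_mem he) hr
      rw [commutatorElement_def]
      exact mul_mem h1 (inv_mem hr)
  · apply le_antisymm
    · rw [Subgroup.commutator_le]
      intro e he f hf
      rw [commutatorElement_def]
      exact mul_mem (mul_mem (mul_mem he hf) (inv_mem he)) (inv_mem hf)
    · refine (Subgroup.closure_le _).2 ?_
      rintro g ⟨i, j, hij, x, rfl⟩
      obtain ⟨k, hik, hkj⟩ := exists_third hn i j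
      rw [← transv_commutator i j k hij hik hkj x]
      exact Subgroup.commutator_mem_commutator (transv_mem_elem i k hik x)
        (transv_mem_elem k j hkj 1)
end

section
/- Let G be a group and (a_1,b_1), (a_2,b_2) ∈ G × G with a_2 = [a_1^{-1}, g] and b_2 = [g, b_1] for some g in G. Then a_2 b_2 = (a_1 b_1)^{g^{-1} a_1} · ((a_1 b_1)^{-1})^{a_1}; in particular a_2 b_2 is a product of 2 conjugates of a_1 b_1 and (a_1 b_1)^{-1} by elements of the subgroup generated by a_1 and g. -/
open Matrix

open scoped commutatorElement in
theorem reduction_lemma_base {G : Type*} [Group G] (a₁ b₁ a₂ b₂ g : G)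
    (ha : a₂ = ⁅a₁⁻¹, g⁆) (hb : b₂ = ⁅g, b₁⁆) :
    a₂ * b₂ = (g⁻¹ * a₁)⁻¹ * (a₁ * b₁) * (g⁻¹ * a₁) * (a₁⁻¹ * (a₁ * b₁)⁻¹ * a₁) ∧
    IsProdConj (Subgroup.closure {a₁, g}) (a₁ * b₁) (a₂ * b₂) 2 := by
  subst ha hb
  have key : ⁅a₁⁻¹, g⁆ * ⁅g, b₁⁆ =
      (g⁻¹ * a₁)⁻¹ * (a₁ * b₁) * (g⁻¹ * a₁) * (a₁⁻¹ * (a₁ * b₁)⁻¹ * a₁) := by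
    simp only [commutatorElement_def]
    group
  refine ⟨key, ![(g⁻¹ * a₁)⁻¹ * (a₁ * b₁) * (g⁻¹ * a₁),
      a₁⁻¹ * (a₁ * b₁)⁻¹ * a₁], ?_, ?_⟩
  · intro k
    have ha₁ : a₁ ∈ Subgroup.closure ({a₁, g} : Set G) :=
      Subgroup.subset_closure (by simp)
    have hg : g ∈ Subgroup.closure ({a₁, g} : Set G) :=
      Subgroup.subset_closure (by simp)
    fin_cases k
    · exact ⟨g⁻¹ * a₁, mul_mem (inv_mem hg) ha₁, Or.inl rfl⟩
    · exact ⟨a₁, ha₁, Or.inr rfl⟩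
  · simp [key, mul_assoc]
end
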